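/- Theorem 1, case σ > 0, merit-function bound: Suppose Assumptions 1, 2 and 4 hold with parameter σ > 0, and run the OptDE algorithm with this σ for K ≥ 1 iterations. Then the returned best iterate w̃_K satisfies, for every D > 0, sup{ ⟨F(w̃_K), w̃_K − w⟩ : w ∈ 𝒲, ‖w̃_K − w‖ ≤ D } ≤ C_0 D ‖w_0 − w*‖ √(L / (A_{K−1} + a_1)), where C_0 = (1 + δ/(αγ)) √(8α/γ), a_1 = αγ/L, A_{K−1} = (1/σ)((1 + αγσ/L)^{K−1} − 1), and w* is the σ-weak solution from Assumption 4. -/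

import Mathlib

open scoped RealInnerProductSpace
open Finset MeasureTheory

/-- `Vec d` is the ambient space `ℝ^d` with its standard inner product. -/
abbrev Vec (d : ℕ) := EuclideanSpace ℝ (Fin d)

/-- The dual norm `‖y‖_* = sup_{nrm x ≤ 1} ⟪x, y⟫` of a (general) norm `nrm` on `ℝ^d`. -/
noncomputable def dualNorm {d : ℕ} (nrm : Vec d → ℝ) (y : Vec d) : ℝ :=
  sSup ((fun x => (⟪x, y⟫ : ℝ)) '' {x | nrm x ≤ 1})

/-- The Bregman divergence `V_v(w) = ½‖w‖² − ½‖v‖² − ⟪∇½‖v‖², w − v⟫` of `½ nrm²`,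
where `g` is the gradient map of `½ nrm²`. -/
noncomputable def breg {d : ℕ} (nrm : Vec d → ℝ) (g : Vec d → Vec d) (v w : Vec d) : ℝ :=
  nrm w ^ 2 / 2 - nrm v ^ 2 / 2 - ⟪g v, w - v⟫

open scoped Topology

section Aux

lemma grad_aux' {d : ℕ} {nrm : Vec d → ℝ} {g : Vec d → Vec d}
    (hgrad : ∀ x : Vec d, HasGradientAt (fun v : Vec d => nrm v ^ 2 / 2) (g x) x)
    (c z₀ : Vec d) (r : ℝ) (x : Vec d) :
    HasGradientAt (fun y : Vec d => (⟪c, y⟫ : ℝ) + r * nrm (y - z₀) ^ 2)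
      (c + (2 * r) • g (x - z₀)) x := by
  rw [hasGradientAt_iff_hasFDerivAt]
  have h1 : HasFDerivAt (fun y : Vec d => (⟪c, y⟫ : ℝ)) (innerSL ℝ c) x :=
    (innerSL ℝ c).hasFDerivAt
  have hsub : HasFDerivAt (fun y : Vec d => y - z₀) (ContinuousLinearMap.id ℝ (Vec d)) x :=
    (hasFDerivAt_id x).sub_const z₀
  have h2 : HasFDerivAt (fun y : Vec d => nrm (y - z₀) ^ 2 / 2)
      ((InnerProductSpace.toDual ℝ (Vec d) (g (x - z₀))).comp
        (ContinuousLinearMap.id ℝ (Vec d))) x :=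
    by have := (hgrad (x - z₀)).hasFDerivAt.comp x hsub; exact this
  have h3 := h1.add (h2.const_mul (2 * r))
  have hfe : (fun y : Vec d => (⟪c, y⟫ : ℝ) + 2 * r * (nrm (y - z₀) ^ 2 / 2)) =
      (fun y : Vec d => (⟪c, y⟫ : ℝ) + r * nrm (y - z₀) ^ 2) := by
    funext y; ring
  change HasFDerivAt (fun y : Vec d => (⟪c, y⟫ : ℝ) + 2 * r * (nrm (y - z₀) ^ 2 / 2)) _ x at h3
  rw [hfe] at h3
  refine h3.congr_fderiv ?_
  ext y
  simp [InnerProductSpace.toDual_apply_apply, inner_add_left, real_inner_smul_left]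

lemma vi_of_isMinOn' {d : ℕ} {W : Set (Vec d)} (hWcv : Convex ℝ W)
    {f : Vec d → ℝ} {G x₀ : Vec d} (hx₀ : x₀ ∈ W)
    (hf : HasGradientAt f G x₀) (hmin : IsMinOn f W x₀) :
    ∀ v ∈ W, 0 ≤ (⟪G, v - x₀⟫ : ℝ) := by
  intro v hv
  set u := v - x₀ with hu
  have hc : HasDerivAt (fun t : ℝ => x₀ + t • u) u 0 := by
    simpa using ((hasDerivAt_id (0:ℝ)).smul_const u).const_add x₀
  have hd : HasDerivAt (fun t : ℝ => f (x₀ + t • u)) (⟪G, u⟫ : ℝ) 0 := by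
    have hf' : HasFDerivAt f ((InnerProductSpace.toDual ℝ (Vec d)) G) (x₀ + (0:ℝ) • u) := by
      simpa using hf.hasFDerivAt
    have := hf'.comp_hasDerivAt 0 hc
    simpa [InnerProductSpace.toDual_apply_apply, Function.comp_def] using this
  have hslope : ∀ t ∈ Set.Ioc (0:ℝ) 1,
      0 ≤ (f (x₀ + t • u) - f (x₀ + (0:ℝ) • u)) / (t - 0) := by
    intro t ht
    have hmem : x₀ + t • u ∈ W := by
      have := hWcv hx₀ hv (by linarith [ht.1, ht.2] : (0:ℝ) ≤ 1 - t) (le_of_lt ht.1)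
        (by ring : (1 - t) + t = 1)
      convert this using 1
      rw [hu]; module
    have h1 : f x₀ ≤ f (x₀ + t • u) := hmin hmem
    apply div_nonneg _ (by linarith [ht.1])
    simpa using h1
  have htend : Filter.Tendsto (fun t : ℝ => (f (x₀ + t • u) - f (x₀ + (0:ℝ) • u)) / (t - 0))
      (𝓝[>] (0:ℝ)) (𝓝 (⟪G, u⟫ : ℝ)) := by
    have h := hd.hasDerivWithinAt (s := Set.Ici (0:ℝ))
    have h2 := hasDerivWithinAt_iff_tendsto_slope.mp h
    have hse : (Set.Ici (0:ℝ)) \ {0} = Set.Ioi (0:ℝ) := by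
      ext t
      simp only [Set.mem_diff, Set.mem_Ici, Set.mem_singleton_iff, Set.mem_Ioi]
      constructor
      · rintro ⟨h1, h2⟩; exact lt_of_le_of_ne h1 (Ne.symm h2)
      · intro h1; exact ⟨le_of_lt h1, ne_of_gt h1⟩
    rw [hse] at h2
    refine h2.congr ?_
    intro t
    simp [slope_def_field]
  refine ge_of_tendsto htend ?_
  filter_upwards [Ioc_mem_nhdsGT_of_mem (by norm_num : (0:ℝ) ∈ Set.Ico (0:ℝ) 1)] with t ht
  exact hslope t ht

section nrmAux
variable {d : ℕ} {nrm : Vec d → ℝ}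
  (hnrm_pos : ∀ x : Vec d, x ≠ 0 → 0 < nrm x)
  (hnrm_add : ∀ x y : Vec d, nrm (x + y) ≤ nrm x + nrm y)
  (hnrm_smul : ∀ (c : ℝ) (x : Vec d), nrm (c • x) = |c| * nrm x)

include hnrm_smul in
lemma nrm_zero' : nrm 0 = 0 := by
  have := hnrm_smul 0 0; simpa using this

include hnrm_pos hnrm_smul in
lemma nrm_nonneg' : ∀ x : Vec d, 0 ≤ nrm x := by
  intro x
  rcases eq_or_ne x 0 with h | h
  · rw [h, nrm_zero' hnrm_smul]
  · exact (hnrm_pos x h).le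

include hnrm_smul in
lemma nrm_neg' (x : Vec d) : nrm (-x) = nrm x := by
  have := hnrm_smul (-1) x; simpa using this

include hnrm_smul in
lemma nrm_sub_comm' (x y : Vec d) : nrm (x - y) = nrm (y - x) := by
  rw [← nrm_neg' hnrm_smul (x - y)]; congr 1; abel

include hnrm_pos hnrm_add hnrm_smul in
lemma nrm_lower : ∃ c : ℝ, 0 < c ∧ ∀ x : Vec d, c * ‖x‖ ≤ nrm x := by
  classical
  set C : ℝ := ∑ i : Fin d, nrm (EuclideanSpace.single i (1:ℝ)) with hC
  have hub : ∀ x : Vec d, nrm x ≤ C * ‖x‖ := by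
    intro x
    have hrep : x = ∑ i : Fin d, x i • EuclideanSpace.single i (1:ℝ) := by
      apply PiLp.ext; intro i
      rw [WithLp.ofLp_sum, Finset.sum_apply]
      simp [EuclideanSpace.single_apply]
    have hsum : ∀ (s : Finset (Fin d)) (f : Fin d → Vec d),
        nrm (∑ i ∈ s, f i) ≤ ∑ i ∈ s, nrm (f i) := by
      intro s f
      induction s using Finset.induction with
      | empty => simp [nrm_zero' hnrm_smul]
      | insert _ _ hni ih =>
        rw [Finset.sum_insert hni, Finset.sum_insert hni]
        exact le_trans (hnrm_add _ _) (by linarith)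
    calc nrm x = nrm (∑ i : Fin d, x i • EuclideanSpace.single i (1:ℝ)) := by rw [← hrep]
      _ ≤ ∑ i : Fin d, nrm (x i • EuclideanSpace.single i (1:ℝ)) := hsum _ _
      _ = ∑ i : Fin d, |x i| * nrm (EuclideanSpace.single i (1:ℝ)) := by
          simp [hnrm_smul]
      _ ≤ ∑ i : Fin d, ‖x‖ * nrm (EuclideanSpace.single i (1:ℝ)) := by
          apply Finset.sum_le_sum
          intro i _
          apply mul_le_mul_of_nonneg_right _ (nrm_nonneg' hnrm_pos hnrm_smul _)
          calc |x i| = ‖x i‖ := rfl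
            _ ≤ ‖x‖ := by
              have h2 := abs_real_inner_le_norm (EuclideanSpace.single i (1:ℝ)) x
              rw [EuclideanSpace.inner_single_left] at h2
              simp only [map_one, one_mul] at h2
              rw [EuclideanSpace.norm_single] at h2
              simpa using h2
      _ = C * ‖x‖ := by rw [← Finset.mul_sum, mul_comm]
  have hcont : Continuous nrm := by
    have hlip : ∀ x y : Vec d, |nrm x - nrm y| ≤ C * ‖x - y‖ := by
      intro x y
      have h1 : nrm x ≤ nrm (x - y) + nrm y := by
        have := hnrm_add (x - y) y; simpa using this
      have h2 : nrm y ≤ nrm (x - y) + nrm x := by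
        have := hnrm_add (y - x) x
        rw [nrm_sub_comm' hnrm_smul] at this
        simpa using this
      have h3 := hub (x - y)
      rw [abs_le]; constructor <;> linarith
    have hC0' : 0 ≤ C := by
      apply Finset.sum_nonneg; intro i _; exact nrm_nonneg' hnrm_pos hnrm_smul _
    rw [Metric.continuous_iff]
    intro x ε hε
    refine ⟨ε / (C + 1), div_pos hε (by linarith), fun y hy => ?_⟩
    rw [Real.dist_eq]
    have hd : dist y x = ‖y - x‖ := dist_eq_norm y x
    rw [hd] at hy
    have hδ : (C + 1) * (ε / (C + 1)) = ε := by field_simp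
    have hδpos : 0 < ε / (C + 1) := div_pos hε (by linarith)
    calc |nrm y - nrm x| ≤ C * ‖y - x‖ := hlip y x
      _ < ε := by
        have h5 : C * ‖y - x‖ ≤ C * (ε / (C + 1)) := mul_le_mul_of_nonneg_left hy.le hC0'
        nlinarith
  by_cases hdim : ∀ x : Vec d, x = 0
  · refine ⟨1, one_pos, fun x => ?_⟩
    rw [hdim x, nrm_zero' hnrm_smul]; simp
  · push_neg at hdim
    obtain ⟨x₀, hx₀⟩ := hdim
    have hsne : (Metric.sphere (0 : Vec d) 1).Nonempty := by
      refine ⟨‖x₀‖⁻¹ • x₀, ?_⟩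
      simp [norm_smul, abs_of_nonneg (inv_nonneg.mpr (norm_nonneg x₀)),
        inv_mul_cancel₀ (norm_ne_zero_iff.mpr hx₀)]
    obtain ⟨m, hm, hmin⟩ := (isCompact_sphere (0 : Vec d) 1).exists_isMinOn hsne hcont.continuousOn
    have hm1 : ‖m‖ = 1 := by simpa using hm
    have hmne : m ≠ 0 := by intro h; rw [h] at hm1; simp at hm1
    refine ⟨nrm m, hnrm_pos m hmne, fun x => ?_⟩
    rcases eq_or_ne x 0 with h | h
    · simp [h, nrm_zero' hnrm_smul]
    · have hxn : ‖x‖ ≠ 0 := norm_ne_zero_iff.mpr h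
      have hu : ‖x‖⁻¹ • x ∈ Metric.sphere (0 : Vec d) 1 := by
        simp [norm_smul, abs_of_nonneg (inv_nonneg.mpr (norm_nonneg x)), inv_mul_cancel₀ hxn]
      have h1 : nrm m ≤ nrm (‖x‖⁻¹ • x) := hmin hu
      have hinv : (‖x‖ : ℝ) • (‖x‖⁻¹ • x) = x := by
        rw [smul_smul, mul_inv_cancel₀ hxn, one_smul]
      have h2 : nrm x = ‖x‖ * nrm (‖x‖⁻¹ • x) := by
        calc nrm x = nrm ((‖x‖ : ℝ) • (‖x‖⁻¹ • x)) := by rw [hinv]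
          _ = |‖x‖| * nrm (‖x‖⁻¹ • x) := hnrm_smul _ _
          _ = ‖x‖ * nrm (‖x‖⁻¹ • x) := by rw [abs_of_nonneg (norm_nonneg x)]
      rw [h2]
      have := mul_le_mul_of_nonneg_left h1 (norm_nonneg x)
      linarith
end nrmAux

section pairAux
variable {d : ℕ} {nrm : Vec d → ℝ} {c : ℝ}
  (hn0 : nrm 0 = 0)
  (hnn : ∀ x : Vec d, 0 ≤ nrm x)
  (hnrm_smul : ∀ (cc : ℝ) (x : Vec d), nrm (cc • x) = |cc| * nrm x)
  (hc : 0 < c) (hlow : ∀ x : Vec d, c * ‖x‖ ≤ nrm x)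

include hc hlow in
lemma dual_bdd (y : Vec d) : BddAbove ((fun x => (⟪x, y⟫ : ℝ)) '' {x | nrm x ≤ 1}) := by
  refine ⟨‖y‖ / c, ?_⟩
  rintro r ⟨x, hx, rfl⟩
  simp only [Set.mem_setOf_eq] at hx
  have h1 : ‖x‖ ≤ 1 / c := by
    rw [le_div_iff₀ hc, mul_comm]
    exact le_trans (hlow x) hx
  calc (⟪x, y⟫ : ℝ) ≤ ‖x‖ * ‖y‖ := real_inner_le_norm x y
    _ ≤ (1 / c) * ‖y‖ := mul_le_mul_of_nonneg_right h1 (norm_nonneg y)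
    _ = ‖y‖ / c := by ring

include hn0 hc hlow in
lemma dual_nonneg (y : Vec d) : 0 ≤ dualNorm nrm y := by
  apply le_csSup (dual_bdd hc hlow y)
  exact ⟨0, by simp [hn0], by simp⟩

include hn0 hnn hnrm_smul hc hlow in
lemma dual_pair (u y : Vec d) : (⟪u, y⟫ : ℝ) ≤ nrm u * dualNorm nrm y := by
  rcases eq_or_ne u 0 with h | h
  · simp [h, hn0]
  · have ht : 0 < nrm u := by
      rcases (hnn u).lt_or_eq with h' | h'
      · exact h'
      · exfalso
        apply h
        have h2 := hlow u
        rw [← h'] at h2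
        have h3 : ‖u‖ ≤ 0 := by nlinarith [norm_nonneg u]
        exact norm_le_zero_iff.mp h3
    have hmem : ((nrm u)⁻¹ • u) ∈ {x : Vec d | nrm x ≤ 1} := by
      simp only [Set.mem_setOf_eq, hnrm_smul, abs_of_nonneg (inv_nonneg.mpr (hnn u))]
      rw [inv_mul_cancel₀ (ne_of_gt ht)]
    have hle : (⟪(nrm u)⁻¹ • u, y⟫ : ℝ) ≤ dualNorm nrm y :=
      le_csSup (dual_bdd hc hlow y) ⟨_, hmem, rfl⟩
    rw [real_inner_smul_left] at hle
    have := mul_le_mul_of_nonneg_left hle (le_of_lt ht)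
    rw [← mul_assoc, mul_inv_cancel₀ (ne_of_gt ht), one_mul] at this
    exact this

include hn0 hnn hnrm_smul hc hlow in
lemma dual_pair' (u y : Vec d) : -(nrm u * dualNorm nrm y) ≤ (⟪u, y⟫ : ℝ) := by
  have := dual_pair hn0 hnn hnrm_smul hc hlow (-u) y
  rw [inner_neg_left] at this
  have h2 : nrm (-u) = nrm u := by
    have := hnrm_smul (-1) u; simpa using this
  rw [h2] at this
  linarith
end pairAux

lemma sum_Icc_one {M : Type*} [AddCommMonoid M] (f : ℕ → M) (n : ℕ) :
    ∑ i ∈ Finset.Icc 1 n, f i = ∑ j ∈ Finset.range n, f (j + 1) := by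
  induction n with
  | zero => simp
  | succ n ih =>
    rw [Finset.sum_Icc_succ_top (by omega : 1 ≤ n + 1), ih, Finset.sum_range_succ]

lemma young_step (γ α b bk q pp r1 r2 : ℝ) (hγ0 : 0 < γ)
    (hα0 : 0 < α) (hb : 1 ≤ b) (hbk : b ≤ bk)
    (hq : 0 ≤ q) (hpp : 0 ≤ pp) (hr1 : 0 ≤ r1) (hr2 : 0 ≤ r2) (htri : pp ≤ r1 + r2) :
    α * γ * b * (pp * q) ≤ γ / 4 * bk * q ^ 2 + 2 * α ^ 2 * γ * b * (r1 ^ 2 + r2 ^ 2) := by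
  have hbkpos : 0 < bk := by linarith
  rw [← sub_nonneg]
  have key : 0 ≤ bk * (γ / 4 * bk * q ^ 2 + 2 * α ^ 2 * γ * b * (r1 ^ 2 + r2 ^ 2)
      - α * γ * b * (pp * q)) := by
    have hpp2 : pp ^ 2 ≤ 2 * (r1 ^ 2 + r2 ^ 2) := by nlinarith [sq_nonneg (r1 - r2)]
    have hbb : b ^ 2 * pp ^ 2 ≤ b * bk * (2 * (r1 ^ 2 + r2 ^ 2)) := by
      have h1 : b ^ 2 * pp ^ 2 ≤ b ^ 2 * (2 * (r1 ^ 2 + r2 ^ 2)) :=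
        mul_le_mul_of_nonneg_left hpp2 (sq_nonneg b)
      have h2 : b ^ 2 * (2 * (r1 ^ 2 + r2 ^ 2)) ≤ b * bk * (2 * (r1 ^ 2 + r2 ^ 2)) := by
        apply mul_le_mul_of_nonneg_right _ (by positivity)
        nlinarith
      linarith
    have hsq : 0 ≤ γ / 4 * (bk * q - 2 * α * b * pp) ^ 2 := by positivity
    have hrest : 0 ≤ γ * α ^ 2 * (b * bk * (2 * (r1 ^ 2 + r2 ^ 2)) - b ^ 2 * pp ^ 2) := by
      apply mul_nonneg (by positivity)
      linarith
    nlinarith [hsq, hrest]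
  exact nonneg_of_mul_nonneg_right key hbkpos

end Aux

set_option maxHeartbeats 2000000 in
/-- **Theorem 1, case σ > 0, merit-function bound.**
Under Assumptions 1, 2 and 4 (existence of a σ-weak solution with σ > 0), the best
iterate `w kt` returned by OptDE run with this σ for `K ≥ 1` iterations satisfies
`sup{⟪F(w̃_K), w̃_K − v⟫ : v ∈ W, ‖w̃_K − v‖ ≤ D} ≤ C₀ D ‖w₀ − w*‖ √(L / (A_{K−1} + a₁))`
with `C₀ = (1 + δ/(αγ)) √(8α/γ)`. -/
theorem optde_sigma_pos_merit_bound
    {d : ℕ} (W : Set (Vec d)) (hWne : W.Nonempty) (hWcl : IsClosed W) (hWcv : Convex ℝ W)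
    (F : Vec d → Vec d) (nrm : Vec d → ℝ) (g : Vec d → Vec d)
    (L γ δ α σ : ℝ)
    -- `nrm` is a norm on ℝ^d
    (hnrm_pos : ∀ x : Vec d, x ≠ 0 → 0 < nrm x)
    (hnrm_add : ∀ x y : Vec d, nrm (x + y) ≤ nrm x + nrm y)
    (hnrm_smul : ∀ (c : ℝ) (x : Vec d), nrm (c • x) = |c| * nrm x)
    (hL : 0 < L) (hγ0 : 0 < γ) (hγ1 : γ ≤ 1) (hδ : 0 < δ) (hσ : 0 < σ)
    -- Assumption 1
    (hLip : ∀ v ∈ W, ∀ u ∈ W, dualNorm nrm (F v - F u) ≤ L * nrm (v - u))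
    -- Assumption 2
    (hgrad : ∀ x : Vec d, HasGradientAt (fun v : Vec d => nrm v ^ 2 / 2) (g x) x)
    (hstrong : ∀ v x : Vec d,
      nrm v ^ 2 / 2 + ⟪g v, x - v⟫ + γ / 2 * nrm (x - v) ^ 2 ≤ nrm x ^ 2 / 2)
    (hgbound : ∀ x : Vec d, dualNorm nrm (g x) ≤ δ * nrm x)
    -- OptDE algorithm with parameter σ
    (hα0 : 0 < α)
    (hαle : α ≤ min (1 / (4 * Real.sqrt 2)) (Real.sqrt 3 / (4 * Real.sqrt γ)))
    (a A : ℕ → ℝ) (hA0 : A 0 = 0)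
    (ha : ∀ k, 1 ≤ k → a k = α * γ * (1 + σ * A (k - 1)) / L)
    (hArec : ∀ k, 1 ≤ k → A k = A (k - 1) + a k)
    (w z : ℕ → Vec d) (hw0W : w 0 ∈ W) (hz0 : z 0 = w 0)
    -- Assumption 4: existence of a σ-weak solution w* (w.r.t. the center w 0)
    (wstar : Vec d) (hwsW : wstar ∈ W)
    (hsweak : ∀ v ∈ W,
      σ / γ * (breg nrm g (v - w 0) (wstar - w 0) + breg nrm g (wstar - w 0) (v - w 0)) ≤
        (⟪F v, v - wstar⟫ : ℝ))
    -- extrapolation step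
    (hwk : ∀ k, 1 ≤ k → w k ∈ W ∧
      IsMinOn (fun x => (⟪(α / L) • F (w (k - 1)), x⟫ : ℝ) +
        1 / (2 * γ) * nrm (x - z (k - 1)) ^ 2) W (w k))
    -- dual averaging step
    (hzk : ∀ k, 1 ≤ k → z k ∈ W ∧
      IsMinOn (fun x =>
        (⟪∑ i ∈ Finset.Icc 1 k, a i • (F (w i) - (σ / γ) • g (w i - w 0)), x⟫ : ℝ) +
        (1 + σ * A k) / (2 * γ) * nrm (x - w 0) ^ 2) W (z k))
    (K : ℕ) (hK : 1 ≤ K)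
    -- the returned best iterate w̃_K = w kt
    (kt : ℕ) (hktmem : kt ∈ Finset.Icc 1 K)
    (hbest : ∀ k ∈ Finset.Icc 1 K,
      nrm (w kt - z (kt - 1)) + nrm (w (kt - 1) - z (kt - 1)) ≤
        nrm (w k - z (k - 1)) + nrm (w (k - 1) - z (k - 1)))
    (D : ℝ) (hD : 0 < D) :
    ∀ v ∈ W, nrm (w kt - v) ≤ D →
      (⟪F (w kt), w kt - v⟫ : ℝ) ≤
        ((1 + δ / (α * γ)) * Real.sqrt (8 * α / γ)) * D * nrm (w 0 - wstar) *
          Real.sqrt (L / (A (K - 1) + a 1)) := by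
  intro v hv hvD
  -- ## basic facts about nrm and the dual pairing
  have hn0 : nrm 0 = 0 := nrm_zero' hnrm_smul
  have hnn : ∀ x : Vec d, 0 ≤ nrm x := nrm_nonneg' hnrm_pos hnrm_smul
  have hnsub : ∀ x y : Vec d, nrm (x - y) = nrm (y - x) := nrm_sub_comm' hnrm_smul
  obtain ⟨cl, hcl, hlow⟩ := nrm_lower hnrm_pos hnrm_add hnrm_smul
  have hpair : ∀ u y : Vec d, (⟪u, y⟫ : ℝ) ≤ nrm u * dualNorm nrm y :=
    dual_pair hn0 hnn hnrm_smul hcl hlow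
  have hpair' : ∀ u y : Vec d, -(nrm u * dualNorm nrm y) ≤ (⟪u, y⟫ : ℝ) :=
    dual_pair' hn0 hnn hnrm_smul hcl hlow
  have hdnn : ∀ y : Vec d, 0 ≤ dualNorm nrm y := dual_nonneg hn0 hcl hlow
  have hγne : γ ≠ 0 := ne_of_gt hγ0
  have hLne : L ≠ 0 := ne_of_gt hL
  have hαne : α ≠ 0 := ne_of_gt hα0
  have hα2 : α ^ 2 ≤ 1 / 32 := by
    have h1 : α ≤ 1 / (4 * Real.sqrt 2) := le_trans hαle (min_le_left _ _)
    have h3 : α ^ 2 ≤ (1 / (4 * Real.sqrt 2)) ^ 2 := pow_le_pow_left₀ hα0.le h1 2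
    have h4 : (1 / (4 * Real.sqrt 2)) ^ 2 = 1 / 32 := by
      rw [div_pow, mul_pow, Real.sq_sqrt (by norm_num : (0:ℝ) ≤ 2)]
      norm_num
    linarith
  -- ## facts about the sequences a, A
  have haA : ∀ j : ℕ, a (j + 1) = α * γ * (1 + σ * A j) / L := by
    intro j; have := ha (j + 1) (by omega); simpa using this
  have hAA : ∀ j : ℕ, A (j + 1) = A j + a (j + 1) := by
    intro j; have := hArec (j + 1) (by omega); simpa using this
  have hA0' : ∀ j : ℕ, 0 ≤ A j := by
    intro j
    induction j with
    | zero => rw [hA0]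
    | succ n ih =>
      have h5 : (0:ℝ) < 1 + σ * A n := by nlinarith
      have h6 : 0 < a (n + 1) := by
        rw [haA n]; apply div_pos _ hL; positivity
      rw [hAA n]; linarith
  have hb1 : ∀ j : ℕ, (1:ℝ) ≤ 1 + σ * A j := by intro j; nlinarith [hA0' j]
  have hapos : ∀ j : ℕ, 0 < a (j + 1) := by
    intro j
    rw [haA j]
    exact div_pos (mul_pos (mul_pos hα0 hγ0) (by linarith [hb1 j])) hL
  -- ## g 0 = 0
  have hg0 : g 0 = 0 := by
    by_contra hne
    have hgn : (0:ℝ) < ‖g 0‖ ^ 2 := pow_pos (norm_pos_iff.mpr hne) 2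
    have key : ∀ t : ℝ, 0 < t → t * ‖g 0‖ ^ 2 ≤ ((1 - γ) / 2 * nrm (g 0) ^ 2) * t ^ 2 := by
      intro t ht
      have h := hstrong 0 (t • g 0)
      simp only [sub_zero, hn0] at h
      rw [real_inner_smul_right, real_inner_self_eq_norm_sq] at h
      rw [hnrm_smul, abs_of_pos ht] at h
      nlinarith
    set Cg : ℝ := (1 - γ) / 2 * nrm (g 0) ^ 2 with hCgdef
    have hCg : 0 ≤ Cg := mul_nonneg (by linarith) (sq_nonneg _)
    have key2 : ∀ t : ℝ, 0 < t → ‖g 0‖ ^ 2 ≤ Cg * t := by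
      intro t ht
      have hk := key t ht
      have h7 : t * ‖g 0‖ ^ 2 ≤ t * (Cg * t) := by nlinarith
      exact le_of_mul_le_mul_left h7 ht
    have h1 := key2 (‖g 0‖ ^ 2 / (Cg + 1)) (div_pos hgn (by linarith))
    have h2 : Cg * (‖g 0‖ ^ 2 / (Cg + 1)) * (Cg + 1) = Cg * ‖g 0‖ ^ 2 := by
      field_simp
    nlinarith
  -- ## notation
  obtain ⟨Ξ, hΞ⟩ : ∃ Ξ : ℕ → Vec d, ∀ k, Ξ k = F (w k) - (σ / γ) • g (w k - w 0) :=
    ⟨_, fun _ => rfl⟩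
  obtain ⟨S, hS⟩ : ∃ S : ℕ → Vec d,
      ∀ k, S k = ∑ i ∈ Finset.Icc 1 k, a i • (F (w i) - (σ / γ) • g (w i - w 0)) :=
    ⟨_, fun _ => rfl⟩
  obtain ⟨Φ, hΦ⟩ : ∃ Φ : ℕ → ℝ,
      ∀ k, Φ k = ⟪S k, z k⟫ + (1 + σ * A k) / (2 * γ) * nrm (z k - w 0) ^ 2 :=
    ⟨_, fun _ => rfl⟩
  have hSrec : ∀ j : ℕ, S (j + 1) = S j + a (j + 1) • Ξ (j + 1) := by
    intro j
    rw [hS, hS, hΞ, Finset.sum_Icc_succ_top (by omega : 1 ≤ j + 1)]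
  have hS0 : S 0 = 0 := by rw [hS]; simp
  have hΦ0 : Φ 0 = 0 := by
    rw [hΦ, hS0, hz0, hA0]
    simp [hn0]
  -- ## memberships
  have hwWall : ∀ k : ℕ, w k ∈ W := by
    intro k
    cases k with
    | zero => exact hw0W
    | succ n => exact (hwk (n + 1) (by omega)).1
  have hzWall : ∀ k : ℕ, z k ∈ W := by
    intro k
    cases k with
    | zero => rw [hz0]; exact hw0W
    | succ n => exact (hzk (n + 1) (by omega)).1
  -- ## variational inequalities from the two minimization steps
  have viP : ∀ j : ℕ, ∀ u ∈ W,
      0 ≤ (α / L) * (⟪F (w j), u - w (j + 1)⟫ : ℝ)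
        + (1 / γ) * ⟪g (w (j + 1) - z j), u - w (j + 1)⟫ := by
    intro j u hu
    have hmin := (hwk (j + 1) (by omega)).2
    simp only [Nat.add_sub_cancel] at hmin
    have hgr := grad_aux' hgrad ((α / L) • F (w j)) (z j) (1 / (2 * γ)) (w (j + 1))
    have h := vi_of_isMinOn' hWcv (hwWall (j + 1)) hgr hmin u hu
    rw [inner_add_left, real_inner_smul_left, real_inner_smul_left] at h
    have e : 2 * (1 / (2 * γ)) = 1 / γ := by field_simp
    rw [e] at h
    linarith
  have viZ : ∀ j : ℕ, 1 ≤ j → ∀ u ∈ W,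
      0 ≤ (⟪S j, u - z j⟫ : ℝ)
        + ((1 + σ * A j) / γ) * ⟪g (z j - w 0), u - z j⟫ := by
    intro j hj u hu
    have hmin := (hzk j hj).2
    have hgr := grad_aux' hgrad
      (∑ i ∈ Finset.Icc 1 j, a i • (F (w i) - (σ / γ) • g (w i - w 0))) (w 0)
      ((1 + σ * A j) / (2 * γ)) (z j)
    have h := vi_of_isMinOn' hWcv (hzWall j) hgr hmin u hu
    rw [inner_add_left, real_inner_smul_left] at h
    have e : 2 * ((1 + σ * A j) / (2 * γ)) = (1 + σ * A j) / γ := by field_simp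
    rw [e, ← hS j] at h
    exact h
  -- ## one-step estimate
  have step : ∀ j : ℕ,
      Φ j + a (j + 1) * ⟪Ξ (j + 1), w (j + 1)⟫
        + σ * a (j + 1) / (2 * γ) * nrm (w (j + 1) - w 0) ^ 2
        + (1 + σ * A j) * (1 / 2 - 2 * α ^ 2 * γ) * nrm (w (j + 1) - z j) ^ 2
        + γ / 4 * (1 + σ * A (j + 1)) * nrm (z (j + 1) - w (j + 1)) ^ 2
        - 2 * α ^ 2 * γ * (1 + σ * A j) * nrm (z j - w j) ^ 2
      ≤ Φ (j + 1) := by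
    intro j
    have hzW1 : z (j + 1) ∈ W := hzWall (j + 1)
    have hb : (1:ℝ) ≤ 1 + σ * A j := hb1 j
    have hbn : (0:ℝ) ≤ 1 + σ * A j := by linarith
    have hbk : 1 + σ * A (j + 1) = (1 + σ * A j) + σ * a (j + 1) := by
      rw [hAA j]; ring
    have hbkge : (1 + σ * A j) ≤ 1 + σ * A (j + 1) := by
      rw [hbk]; nlinarith [hapos j]
    have hdec : Φ (j + 1)
        = (⟪S j, z (j + 1)⟫ + (1 + σ * A j) / (2 * γ) * nrm (z (j + 1) - w 0) ^ 2)
          + a (j + 1) * ⟪Ξ (j + 1), z (j + 1)⟫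
          + σ * a (j + 1) / (2 * γ) * nrm (z (j + 1) - w 0) ^ 2 := by
      rw [hΦ, hSrec j, inner_add_left, real_inner_smul_left, hAA j]; ring
    have hF1 : Φ j + (1 + σ * A j) / 2 * nrm (z (j + 1) - z j) ^ 2
        ≤ ⟪S j, z (j + 1)⟫ + (1 + σ * A j) / (2 * γ) * nrm (z (j + 1) - w 0) ^ 2 := by
      rcases Nat.eq_zero_or_pos j with hj0 | hjpos
      · subst hj0
        rw [hΦ0, hS0, hA0, hz0]
        simp only [inner_zero_left, mul_zero, add_zero, zero_add]
        have h8 := sq_nonneg (nrm (z 1 - w 0))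
        have h9 : (1:ℝ) / 2 ≤ 1 / (2 * γ) := by
          rw [div_le_div_iff₀ (by norm_num) (by positivity)]; linarith
        nlinarith [h8]
      · have hvz := viZ j hjpos (z (j + 1)) hzW1
        have hst := hstrong (z j - w 0) (z (j + 1) - w 0)
        have e1 : z (j + 1) - w 0 - (z j - w 0) = z (j + 1) - z j := by abel
        rw [e1] at hst
        have hsplit : (⟪S j, z (j + 1) - z j⟫ : ℝ) = ⟪S j, z (j + 1)⟫ - ⟪S j, z j⟫ :=
          inner_sub_right _ _ _
        have hcb : (0:ℝ) ≤ (1 + σ * A j) / γ := div_nonneg hbn hγ0.le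
        have hm := mul_le_mul_of_nonneg_left hst hcb
        have e2 : (1 + σ * A j) / γ * (γ / 2 * nrm (z (j + 1) - z j) ^ 2)
            = (1 + σ * A j) / 2 * nrm (z (j + 1) - z j) ^ 2 := by
          field_simp
        have e3 : (1 + σ * A j) / (2 * γ) * nrm (z j - w 0) ^ 2
            = (1 + σ * A j) / γ * (nrm (z j - w 0) ^ 2 / 2) := by ring
        have e4 : (1 + σ * A j) / (2 * γ) * nrm (z (j + 1) - w 0) ^ 2
            = (1 + σ * A j) / γ * (nrm (z (j + 1) - w 0) ^ 2 / 2) := by ring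
        rw [hΦ]
        linarith [hm, hvz, hsplit, e2, e3, e4]
    have eΞ : (⟪Ξ (j + 1), z (j + 1)⟫ : ℝ)
        = ⟪Ξ (j + 1), w (j + 1)⟫ + ⟪F (w j), z (j + 1) - w (j + 1)⟫
          + ⟪F (w (j + 1)) - F (w j), z (j + 1) - w (j + 1)⟫
          - σ / γ * ⟪g (w (j + 1) - w 0), z (j + 1) - w (j + 1)⟫ := by
      have h1 : (⟪Ξ (j + 1), z (j + 1)⟫ : ℝ) - ⟪Ξ (j + 1), w (j + 1)⟫
          = ⟪Ξ (j + 1), z (j + 1) - w (j + 1)⟫ := (inner_sub_right _ _ _).symm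
      have h2 : (⟪Ξ (j + 1), z (j + 1) - w (j + 1)⟫ : ℝ)
          = ⟪F (w (j + 1)), z (j + 1) - w (j + 1)⟫
            - σ / γ * ⟪g (w (j + 1) - w 0), z (j + 1) - w (j + 1)⟫ := by
        rw [hΞ, inner_sub_left, real_inner_smul_left]
      have h3 : (⟪F (w (j + 1)) - F (w j), z (j + 1) - w (j + 1)⟫ : ℝ)
          = ⟪F (w (j + 1)), z (j + 1) - w (j + 1)⟫ - ⟪F (w j), z (j + 1) - w (j + 1)⟫ :=
        inner_sub_left _ _ _
      linarith
    have hvp := viP j (z (j + 1)) hzW1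
    have hP2 : 0 ≤ a (j + 1) * (⟪F (w j), z (j + 1) - w (j + 1)⟫ : ℝ)
        + (1 + σ * A j) * ⟪g (w (j + 1) - z j), z (j + 1) - w (j + 1)⟫ := by
      have ht : (0:ℝ) < a (j + 1) * L / α := div_pos (mul_pos (hapos j) hL) hα0
      have h5 := mul_le_mul_of_nonneg_left hvp (le_of_lt ht)
      rw [mul_zero] at h5
      have e5 : a (j + 1) * L / α * ((α / L) * (⟪F (w j), z (j + 1) - w (j + 1)⟫ : ℝ)
            + (1 / γ) * ⟪g (w (j + 1) - z j), z (j + 1) - w (j + 1)⟫)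
          = a (j + 1) * (⟪F (w j), z (j + 1) - w (j + 1)⟫ : ℝ)
            + (1 + σ * A j) * ⟪g (w (j + 1) - z j), z (j + 1) - w (j + 1)⟫ := by
        rw [haA j]; field_simp
      rw [e5] at h5
      exact h5
    have hB3 : (⟪g (w (j + 1) - z j), z (j + 1) - w (j + 1)⟫ : ℝ)
        ≤ nrm (z (j + 1) - z j) ^ 2 / 2 - nrm (w (j + 1) - z j) ^ 2 / 2
          - γ / 2 * nrm (z (j + 1) - w (j + 1)) ^ 2 := by
      have hst := hstrong (w (j + 1) - z j) (z (j + 1) - z j)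
      have e : z (j + 1) - z j - (w (j + 1) - z j) = z (j + 1) - w (j + 1) := by abel
      rw [e] at hst
      linarith
    have hB5 : (⟪g (w (j + 1) - w 0), z (j + 1) - w (j + 1)⟫ : ℝ)
        ≤ nrm (z (j + 1) - w 0) ^ 2 / 2 - nrm (w (j + 1) - w 0) ^ 2 / 2
          - γ / 2 * nrm (z (j + 1) - w (j + 1)) ^ 2 := by
      have hst := hstrong (w (j + 1) - w 0) (z (j + 1) - w 0)
      have e : z (j + 1) - w 0 - (w (j + 1) - w 0) = z (j + 1) - w (j + 1) := by abel
      rw [e] at hst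
      linarith
    have hB4 : -(nrm (z (j + 1) - w (j + 1)) * (L * nrm (w (j + 1) - w j)))
        ≤ (⟪F (w (j + 1)) - F (w j), z (j + 1) - w (j + 1)⟫ : ℝ) := by
      have hp := hpair' (z (j + 1) - w (j + 1)) (F (w (j + 1)) - F (w j))
      rw [real_inner_comm] at hp
      have hd := hLip (w (j + 1)) (hwWall (j + 1)) (w j) (hwWall j)
      have h6 := mul_le_mul_of_nonneg_left hd (hnn (z (j + 1) - w (j + 1)))
      linarith
    have hB6 : nrm (w (j + 1) - w j) ≤ nrm (w (j + 1) - z j) + nrm (z j - w j) := by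
      have h7 := hnrm_add (w (j + 1) - z j) (z j - w j)
      have e : w (j + 1) - z j + (z j - w j) = w (j + 1) - w j := by abel
      rw [e] at h7
      exact h7
    have hyoung := young_step γ α (1 + σ * A j) (1 + σ * A (j + 1))
      (nrm (z (j + 1) - w (j + 1))) (nrm (w (j + 1) - w j))
      (nrm (w (j + 1) - z j)) (nrm (z j - w j)) hγ0 hα0 hb hbkge
      (hnn _) (hnn _) (hnn _) (hnn _) hB6
    have hsk : (0:ℝ) ≤ σ * a (j + 1) := le_of_lt (mul_pos hσ (hapos j))
    have hm3 := mul_le_mul_of_nonneg_left hB3 hbn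
    have hm4 := mul_le_mul_of_nonneg_left hB4 (le_of_lt (hapos j))
    have hm5 := mul_le_mul_of_nonneg_left hB5
      (div_nonneg hsk hγ0.le : (0:ℝ) ≤ σ * a (j + 1) / γ)
    have c2 : σ * a (j + 1) / γ * (γ / 2 * nrm (z (j + 1) - w (j + 1)) ^ 2)
        = σ * a (j + 1) / 2 * nrm (z (j + 1) - w (j + 1)) ^ 2 := by
      field_simp
    have c3 : a (j + 1) * (nrm (z (j + 1) - w (j + 1)) * (L * nrm (w (j + 1) - w j)))
        = α * γ * (1 + σ * A j)
          * (nrm (w (j + 1) - w j) * nrm (z (j + 1) - w (j + 1))) := by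
      rw [haA j]; field_simp
    have c4 : (0:ℝ) ≤ (1 - γ) * (σ * a (j + 1)) * nrm (z (j + 1) - w (j + 1)) ^ 2 :=
      mul_nonneg (mul_nonneg (by linarith) hsk) (sq_nonneg _)
    have c5 : γ / 4 * (1 + σ * A (j + 1)) * nrm (z (j + 1) - w (j + 1)) ^ 2
        = γ / 4 * (1 + σ * A j) * nrm (z (j + 1) - w (j + 1)) ^ 2
          + γ / 4 * (σ * a (j + 1)) * nrm (z (j + 1) - w (j + 1)) ^ 2 := by
      rw [hbk]; ring
    have c6 : σ * a (j + 1) / γ * (nrm (z (j + 1) - w 0) ^ 2 / 2)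
        = σ * a (j + 1) / (2 * γ) * nrm (z (j + 1) - w 0) ^ 2 := by ring
    have c7 : σ * a (j + 1) / γ * (nrm (w (j + 1) - w 0) ^ 2 / 2)
        = σ * a (j + 1) / (2 * γ) * nrm (w (j + 1) - w 0) ^ 2 := by ring
    have c8 : a (j + 1) * (σ / γ * (⟪g (w (j + 1) - w 0), z (j + 1) - w (j + 1)⟫ : ℝ))
        = σ * a (j + 1) / γ * ⟪g (w (j + 1) - w 0), z (j + 1) - w (j + 1)⟫ := by ring
    have c9 : a (j + 1) * (⟪Ξ (j + 1), z (j + 1)⟫ : ℝ)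
        = a (j + 1) * ⟪Ξ (j + 1), w (j + 1)⟫
          + a (j + 1) * ⟪F (w j), z (j + 1) - w (j + 1)⟫
          + a (j + 1) * ⟪F (w (j + 1)) - F (w j), z (j + 1) - w (j + 1)⟫
          - a (j + 1) * (σ / γ * ⟪g (w (j + 1) - w 0), z (j + 1) - w (j + 1)⟫) := by
      rw [eΞ]; ring
    rw [hdec]
    linarith [hF1, hP2, hm3, hm4, hm5, hyoung, c2, c3, c4, c5, c6, c7, c8, c9]
  -- ## abbreviations for the summands
  obtain ⟨P1, hP1⟩ : ∃ f : ℕ → ℝ, ∀ j, f j = a (j + 1) * ⟪Ξ (j + 1), w (j + 1)⟫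
      + σ * a (j + 1) / (2 * γ) * nrm (w (j + 1) - w 0) ^ 2 := ⟨_, fun _ => rfl⟩
  obtain ⟨R, hR⟩ : ∃ f : ℕ → ℝ, ∀ j, f j =
      (1 + σ * A j) * (1 / 2 - 2 * α ^ 2 * γ) * nrm (w (j + 1) - z j) ^ 2
      + γ / 4 * (1 + σ * A (j + 1)) * nrm (z (j + 1) - w (j + 1)) ^ 2
      - 2 * α ^ 2 * γ * (1 + σ * A j) * nrm (z j - w j) ^ 2 := ⟨_, fun _ => rfl⟩
  -- ## telescoping lower bound on Φ K
  have htel : ∑ j ∈ Finset.range K, (Φ (j + 1) - Φ j) = Φ K - Φ 0 :=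
    Finset.sum_range_sub (fun j => Φ j) K
  have hlow2 : ∑ j ∈ Finset.range K, P1 j + ∑ j ∈ Finset.range K, R j ≤ Φ K := by
    have h1 : ∀ j ∈ Finset.range K, P1 j + R j ≤ Φ (j + 1) - Φ j := by
      intro j _
      have := step j
      rw [hP1, hR]
      linarith
    have h2 := Finset.sum_le_sum h1
    rw [htel, hΦ0] at h2
    rw [← Finset.sum_add_distrib]
    linarith
  -- ## upper bound on Φ K via wstar
  have hup : Φ K ≤ ∑ j ∈ Finset.range K, a (j + 1) * ⟪Ξ (j + 1), wstar⟫
      + (1 + σ * A K) / (2 * γ) * nrm (wstar - w 0) ^ 2 := by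
    have hmin := (hzk K hK).2
    have h0 := isMinOn_iff.mp hmin wstar hwsW
    simp only [← hS] at h0
    have h2 : (⟪S K, wstar⟫ : ℝ) = ∑ j ∈ Finset.range K, a (j + 1) * ⟪Ξ (j + 1), wstar⟫ := by
      rw [hS, sum_inner]
      rw [sum_Icc_one (fun i => (⟪a i • (F (w i) - (σ / γ) • g (w i - w 0)), wstar⟫ : ℝ)) K]
      apply Finset.sum_congr rfl
      intro i _
      rw [real_inner_smul_left, hΞ]
    rw [hΦ, ← h2]
    exact h0
  -- ## the weak-solution inequality, per step
  have hws : ∀ j : ℕ, a (j + 1) * (⟪Ξ (j + 1), wstar⟫ : ℝ)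
      ≤ P1 j - σ * a (j + 1) / (2 * γ) * nrm (wstar - w 0) ^ 2 := by
    intro j
    have hsw := hsweak (w (j + 1)) (hwWall (j + 1))
    simp only [breg] at hsw
    have hB : (0:ℝ) ≤ nrm (w (j + 1) - w 0) ^ 2 / 2 - nrm (wstar - w 0) ^ 2 / 2
        - ⟪g (wstar - w 0), w (j + 1) - w 0 - (wstar - w 0)⟫ := by
      have hst := hstrong (wstar - w 0) (w (j + 1) - w 0)
      nlinarith [mul_nonneg (le_of_lt hγ0) (sq_nonneg (nrm (w (j + 1) - w 0 - (wstar - w 0))))]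
    have e2 : (⟪Ξ (j + 1), w (j + 1) - wstar⟫ : ℝ)
        = ⟪F (w (j + 1)), w (j + 1) - wstar⟫
          - σ / γ * ⟪g (w (j + 1) - w 0), w (j + 1) - wstar⟫ := by
      rw [hΞ, inner_sub_left, real_inner_smul_left]
    have e3 : (⟪g (w (j + 1) - w 0), w (j + 1) - wstar⟫ : ℝ)
        = -(⟪g (w (j + 1) - w 0), wstar - w 0 - (w (j + 1) - w 0)⟫ : ℝ) := by
      rw [← inner_neg_right]
      congr 1
      abel
    have e5 : (⟪Ξ (j + 1), w (j + 1) - wstar⟫ : ℝ)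
        = ⟪Ξ (j + 1), w (j + 1)⟫ - ⟪Ξ (j + 1), wstar⟫ := inner_sub_right _ _ _
    have hσγ : (0:ℝ) ≤ σ / γ := div_nonneg hσ.le hγ0.le
    have hXlow : σ / γ * (nrm (wstar - w 0) ^ 2 / 2) - σ / γ * (nrm (w (j + 1) - w 0) ^ 2 / 2)
        ≤ (⟪Ξ (j + 1), w (j + 1) - wstar⟫ : ℝ) := by
      have hBσ := mul_le_mul_of_nonneg_left hB hσγ
      nlinarith [hsw, e2, e3, hBσ]
    have hmul := mul_le_mul_of_nonneg_left hXlow (le_of_lt (hapos j))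
    have c1 : a (j + 1) * (σ / γ * (nrm (wstar - w 0) ^ 2 / 2))
        = σ * a (j + 1) / (2 * γ) * nrm (wstar - w 0) ^ 2 := by ring
    have c2 : a (j + 1) * (σ / γ * (nrm (w (j + 1) - w 0) ^ 2 / 2))
        = σ * a (j + 1) / (2 * γ) * nrm (w (j + 1) - w 0) ^ 2 := by ring
    have c3 : a (j + 1) * ((⟪Ξ (j + 1), w (j + 1)⟫ : ℝ) - ⟪Ξ (j + 1), wstar⟫)
        = a (j + 1) * ⟪Ξ (j + 1), w (j + 1)⟫ - a (j + 1) * ⟪Ξ (j + 1), wstar⟫ := by ring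
    rw [hP1]
    rw [e5] at hmul
    linarith [hmul, c1, c2, c3]
  -- ## total bound on the residual sum
  have hAsum : ∑ j ∈ Finset.range K, a (j + 1) = A K := by
    have h1 : ∀ j ∈ Finset.range K, a (j + 1) = A (j + 1) - A j := by
      intro j _; rw [hAA j]; ring
    rw [Finset.sum_congr rfl h1, Finset.sum_range_sub A K, hA0, sub_zero]
  have hRsum : ∑ j ∈ Finset.range K, R j ≤ 1 / (2 * γ) * nrm (wstar - w 0) ^ 2 := by
    have h3 : ∑ j ∈ Finset.range K, (a (j + 1) * (⟪Ξ (j + 1), wstar⟫ : ℝ))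
        ≤ ∑ j ∈ Finset.range K, P1 j
          - σ * A K / (2 * γ) * nrm (wstar - w 0) ^ 2 := by
      have h4 := Finset.sum_le_sum (fun j (_ : j ∈ Finset.range K) => hws j)
      rw [Finset.sum_sub_distrib] at h4
      have h5 : ∑ j ∈ Finset.range K, σ * a (j + 1) / (2 * γ) * nrm (wstar - w 0) ^ 2
          = σ * A K / (2 * γ) * nrm (wstar - w 0) ^ 2 := by
        have h6 : ∀ j ∈ Finset.range K, σ * a (j + 1) / (2 * γ) * nrm (wstar - w 0) ^ 2
            = a (j + 1) * (σ / (2 * γ) * nrm (wstar - w 0) ^ 2) := by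
          intro j _; ring
        rw [Finset.sum_congr rfl h6, ← Finset.sum_mul, hAsum]; ring
      rw [h5] at h4
      exact h4
    have e7 : (1 + σ * A K) / (2 * γ) * nrm (wstar - w 0) ^ 2
        - σ * A K / (2 * γ) * nrm (wstar - w 0) ^ 2
        = 1 / (2 * γ) * nrm (wstar - w 0) ^ 2 := by ring
    linarith [hlow2, hup, h3, e7]
  -- ## the best-iterate residual
  obtain ⟨hkt1, hktK⟩ := Finset.mem_Icc.mp hktmem
  obtain ⟨j0, rfl⟩ : ∃ j0, kt = j0 + 1 := ⟨kt - 1, by omega⟩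
  simp only [Nat.add_sub_cancel] at hbest hvD ⊢
  obtain ⟨rt, hrt⟩ : ∃ r : ℝ, r = nrm (w (j0 + 1) - z j0) + nrm (w j0 - z j0) :=
    ⟨_, rfl⟩
  have hrtnn : 0 ≤ rt := by rw [hrt]; exact add_nonneg (hnn _) (hnn _)
  have hbest' : ∀ j ∈ Finset.range K, rt ≤ nrm (w (j + 1) - z j) + nrm (z j - w j) := by
    intro j hj
    have hjK : j + 1 ∈ Finset.Icc 1 K := by
      simp only [Finset.mem_range] at hj
      simp only [Finset.mem_Icc]; omega
    have h := hbest (j + 1) hjK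
    simp only [Nat.add_sub_cancel] at h
    rw [hrt, hnsub (z j) (w j)]
    exact h
  -- pointwise lower bound for the shifted residual
  obtain ⟨mm, hmm⟩ : ∃ f : ℕ → ℝ, ∀ j, f j = γ / 4 * (1 + σ * A j) * nrm (z j - w j) ^ 2 :=
    ⟨_, fun _ => rfl⟩
  have hmm0 : mm 0 = 0 := by
    rw [hmm, hz0]
    simp [hn0]
  have hmmnn : ∀ j, 0 ≤ mm j := by
    intro j
    rw [hmm]
    have := hb1 j
    positivity
  have hmshift : ∑ j ∈ Finset.range K, mm j ≤ ∑ j ∈ Finset.range K, mm (j + 1) := by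
    have h1 := Finset.sum_range_succ' mm K
    have h2 := Finset.sum_range_succ mm K
    rw [hmm0] at h1
    linarith [hmmnn K]
  have hRlow : ∀ j ∈ Finset.range K,
      γ / 16 * (1 + σ * A j) * rt ^ 2 ≤
        (1 + σ * A j) * (1 / 2 - 2 * α ^ 2 * γ) * nrm (w (j + 1) - z j) ^ 2
        + mm j - 2 * α ^ 2 * γ * (1 + σ * A j) * nrm (z j - w j) ^ 2 := by
    intro j hj
    rw [hmm]
    have htri := hbest' j hj
    have hbj := hb1 j
    have hbnnj : (0:ℝ) ≤ 1 + σ * A j := by linarith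
    have hrt2 : rt ^ 2 ≤ (nrm (w (j + 1) - z j) + nrm (z j - w j)) ^ 2 :=
      pow_le_pow_left₀ hrtnn htri 2
    have h2γ : 2 * γ * α ^ 2 ≤ γ / 16 := by
      have := mul_le_mul_of_nonneg_left hα2 (by positivity : (0:ℝ) ≤ 2 * γ)
      linarith
    have hsq : (nrm (w (j + 1) - z j) + nrm (z j - w j)) ^ 2
        ≤ 2 * (nrm (w (j + 1) - z j) ^ 2 + nrm (z j - w j) ^ 2) := by
      nlinarith [sq_nonneg (nrm (w (j + 1) - z j) - nrm (z j - w j))]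
    have hstep2 : γ / 16 * rt ^ 2
        ≤ γ / 8 * (nrm (w (j + 1) - z j) ^ 2 + nrm (z j - w j) ^ 2) := by
      have h1 := mul_le_mul_of_nonneg_left hrt2 (by positivity : (0:ℝ) ≤ γ / 16)
      have h2 := mul_le_mul_of_nonneg_left hsq (by positivity : (0:ℝ) ≤ γ / 16)
      linarith
    have hmul := mul_le_mul_of_nonneg_left hstep2 hbnnj
    have hcoef1 : γ / 8 ≤ 1 / 2 - 2 * α ^ 2 * γ := by linarith
    have hcoef2 : γ / 8 ≤ γ / 4 - 2 * α ^ 2 * γ := by linarith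
    have hc1 := mul_le_mul_of_nonneg_right hcoef1
      (mul_nonneg hbnnj (sq_nonneg (nrm (w (j + 1) - z j))))
    have hc2 := mul_le_mul_of_nonneg_right hcoef2
      (mul_nonneg hbnnj (sq_nonneg (nrm (z j - w j))))
    nlinarith [hmul, hc1, hc2]
  have hRlowsum : ∑ j ∈ Finset.range K, (γ / 16 * (1 + σ * A j) * rt ^ 2)
      ≤ ∑ j ∈ Finset.range K, R j := by
    have h1 : ∑ j ∈ Finset.range K, R j
        = ∑ j ∈ Finset.range K,
            ((1 + σ * A j) * (1 / 2 - 2 * α ^ 2 * γ) * nrm (w (j + 1) - z j) ^ 2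
              - 2 * α ^ 2 * γ * (1 + σ * A j) * nrm (z j - w j) ^ 2)
          + ∑ j ∈ Finset.range K, mm (j + 1) := by
      rw [← Finset.sum_add_distrib]
      apply Finset.sum_congr rfl
      intro j _
      rw [hR, hmm]
      ring
    have h2 : ∑ j ∈ Finset.range K, (γ / 16 * (1 + σ * A j) * rt ^ 2)
        ≤ ∑ j ∈ Finset.range K,
            ((1 + σ * A j) * (1 / 2 - 2 * α ^ 2 * γ) * nrm (w (j + 1) - z j) ^ 2
              - 2 * α ^ 2 * γ * (1 + σ * A j) * nrm (z j - w j) ^ 2)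
          + ∑ j ∈ Finset.range K, mm j := by
      rw [← Finset.sum_add_distrib]
      apply Finset.sum_le_sum
      intro j hj
      have := hRlow j hj
      linarith
    linarith [hmshift]
  have hbsum : ∑ j ∈ Finset.range K, (γ / 16 * (1 + σ * A j) * rt ^ 2)
      = γ / 16 * rt ^ 2 * (A K * (L / (α * γ))) := by
    have h1 : ∀ j ∈ Finset.range K, γ / 16 * (1 + σ * A j) * rt ^ 2
        = a (j + 1) * (L / (α * γ) * (γ / 16 * rt ^ 2)) := by
      intro j _
      rw [haA j]
      field_simp
    rw [Finset.sum_congr rfl h1, ← Finset.sum_mul, hAsum]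
    ring
  have hAK : 0 < A K := by
    obtain ⟨mK, rfl⟩ : ∃ mK, K = mK + 1 := ⟨K - 1, by omega⟩
    rw [hAA mK]
    linarith [hA0' mK, hapos mK]
  have hrt8 : L * A K * rt ^ 2 ≤ 8 * α / γ * nrm (wstar - w 0) ^ 2 := by
    have hcomb : γ / 16 * rt ^ 2 * (A K * (L / (α * γ)))
        ≤ 1 / (2 * γ) * nrm (wstar - w 0) ^ 2 := by
      rw [← hbsum]
      linarith [hRlowsum, hRsum]
    have e : γ / 16 * rt ^ 2 * (A K * (L / (α * γ))) = L * A K * rt ^ 2 * (1 / (16 * α)) := by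
      field_simp
    rw [e] at hcomb
    have h := mul_le_mul_of_nonneg_left hcomb (by positivity : (0:ℝ) ≤ 16 * α)
    have e2 : 16 * α * (L * A K * rt ^ 2 * (1 / (16 * α))) = L * A K * rt ^ 2 := by
      field_simp
    have e3 : 16 * α * (1 / (2 * γ) * nrm (wstar - w 0) ^ 2)
        = 8 * α / γ * nrm (wstar - w 0) ^ 2 := by
      field_simp
      ring
    linarith [h, e2, e3]
  -- ## final bound on the merit value at the best iterate
  have hDnn : (0:ℝ) ≤ D := hD.le
  have hnvD : nrm (v - w (j0 + 1)) ≤ D := by rw [hnsub]; exact hvD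
  have htri0 : nrm (w (j0 + 1) - w j0) ≤ rt := by
    have h7 := hnrm_add (w (j0 + 1) - z j0) (z j0 - w j0)
    have e : w (j0 + 1) - z j0 + (z j0 - w j0) = w (j0 + 1) - w j0 := by abel
    rw [e] at h7
    rw [hrt, hnsub (w j0) (z j0)]
    exact h7
  have hr1rt : nrm (w (j0 + 1) - z j0) ≤ rt := by
    rw [hrt]; linarith [hnn (w j0 - z j0)]
  -- bound on ⟪F (w (j0+1)) - F (w j0), w (j0+1) - v⟫
  have bound1 : (⟪F (w (j0 + 1)) - F (w j0), w (j0 + 1) - v⟫ : ℝ) ≤ D * (L * rt) := by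
    have hp := hpair (w (j0 + 1) - v) (F (w (j0 + 1)) - F (w j0))
    rw [real_inner_comm] at hp
    have hd := hLip (w (j0 + 1)) (hwWall (j0 + 1)) (w j0) (hwWall j0)
    have h1 : dualNorm nrm (F (w (j0 + 1)) - F (w j0)) ≤ L * rt := by
      have := mul_le_mul_of_nonneg_left htri0 hL.le
      linarith
    have h2 : nrm (w (j0 + 1) - v) * dualNorm nrm (F (w (j0 + 1)) - F (w j0))
        ≤ D * (L * rt) := by
      apply mul_le_mul hvD h1 (hdnn _) hDnn
    linarith
  -- bound on ⟪F (w j0), w (j0+1) - v⟫ via the prox variational inequality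
  have bound2 : (⟪F (w j0), w (j0 + 1) - v⟫ : ℝ) ≤ L * δ / (α * γ) * (D * rt) := by
    have hvp := viP j0 v hv
    have hgb := hgbound (w (j0 + 1) - z j0)
    have hp := hpair (v - w (j0 + 1)) (g (w (j0 + 1) - z j0))
    rw [real_inner_comm] at hp
    have h1 : dualNorm nrm (g (w (j0 + 1) - z j0)) ≤ δ * rt := by
      have := mul_le_mul_of_nonneg_left hr1rt hδ.le
      linarith
    have h2 : nrm (v - w (j0 + 1)) * dualNorm nrm (g (w (j0 + 1) - z j0)) ≤ D * (δ * rt) :=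
      mul_le_mul hnvD h1 (hdnn _) hDnn
    have e1 : (⟪F (w j0), v - w (j0 + 1)⟫ : ℝ) = -(⟪F (w j0), w (j0 + 1) - v⟫ : ℝ) := by
      rw [← inner_neg_right]
      congr 1
      abel
    rw [e1] at hvp
    -- hvp : 0 ≤ (α/L) * (-X) + (1/γ) * G with G ≤ D*(δ*rt)
    have h3 : (α / L) * (⟪F (w j0), w (j0 + 1) - v⟫ : ℝ) ≤ (1 / γ) * (D * (δ * rt)) := by
      have h4 : (⟪g (w (j0 + 1) - z j0), v - w (j0 + 1)⟫ : ℝ) ≤ D * (δ * rt) := by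
        linarith
      have h5 := mul_le_mul_of_nonneg_left h4 (by positivity : (0:ℝ) ≤ 1 / γ)
      linarith
    have h6 := mul_le_mul_of_nonneg_left h3 (by positivity : (0:ℝ) ≤ L / α)
    have e2 : L / α * (α / L * (⟪F (w j0), w (j0 + 1) - v⟫ : ℝ))
        = (⟪F (w j0), w (j0 + 1) - v⟫ : ℝ) := by
      field_simp
    have e3 : L / α * (1 / γ * (D * (δ * rt))) = L * δ / (α * γ) * (D * rt) := by
      field_simp
    linarith [h6, e2, e3]
  have hsplitF : (⟪F (w (j0 + 1)), w (j0 + 1) - v⟫ : ℝ)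
      = ⟪F (w j0), w (j0 + 1) - v⟫ + ⟪F (w (j0 + 1)) - F (w j0), w (j0 + 1) - v⟫ := by
    rw [inner_sub_left]
    ring
  have hmerit : (⟪F (w (j0 + 1)), w (j0 + 1) - v⟫ : ℝ)
      ≤ (1 + δ / (α * γ)) * D * (L * rt) := by
    rw [hsplitF]
    have e4 : (1 + δ / (α * γ)) * D * (L * rt)
        = D * (L * rt) + L * δ / (α * γ) * (D * rt) := by
      field_simp
    linarith [bound1, bound2, e4]
  -- ## conversion of the residual bound into the square-root form
  have hXpos : 0 < A (K - 1) + a 1 := by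
    have ha1 : 0 < a 1 := hapos 0
    linarith [hA0' (K - 1)]
  have hXle : A (K - 1) + a 1 ≤ A K := by
    obtain ⟨mK, rfl⟩ : ∃ mK, K = mK + 1 := ⟨K - 1, by omega⟩
    simp only [Nat.add_sub_cancel]
    rw [hAA mK]
    have h1 : a 1 ≤ a (mK + 1) := by
      rw [haA 0, haA mK, hA0]
      have h2 : (0:ℝ) ≤ σ * A mK := mul_nonneg hσ.le (hA0' mK)
      apply (div_le_div_iff_of_pos_right hL).mpr
      nlinarith [mul_pos hα0 hγ0]
    linarith
  have hny : nrm (w 0 - wstar) = nrm (wstar - w 0) := hnsub _ _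
  have hR2 : (L * rt) ^ 2 ≤ 8 * α / γ * nrm (wstar - w 0) ^ 2 * (L / (A (K - 1) + a 1)) := by
    have h0 : L * (A (K - 1) + a 1) * rt ^ 2 ≤ L * A K * rt ^ 2 := by
      have := mul_nonneg (mul_nonneg (sub_nonneg.mpr hXle) hL.le) (sq_nonneg rt)
      nlinarith
    have h2 := mul_le_mul_of_nonneg_left (h0.trans hrt8) hL.le
    have e4 : 8 * α / γ * nrm (wstar - w 0) ^ 2 * (L / (A (K - 1) + a 1)) * (A (K - 1) + a 1)
        = L * (8 * α / γ * nrm (wstar - w 0) ^ 2) := by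
      field_simp
    have h5 : (L * rt) ^ 2 * (A (K - 1) + a 1) ≤
        8 * α / γ * nrm (wstar - w 0) ^ 2 * (L / (A (K - 1) + a 1)) * (A (K - 1) + a 1) := by
      rw [e4]
      calc (L * rt) ^ 2 * (A (K - 1) + a 1) = L * (L * (A (K - 1) + a 1) * rt ^ 2) := by ring
        _ ≤ L * (8 * α / γ * nrm (wstar - w 0) ^ 2) := h2
    exact (mul_le_mul_iff_of_pos_right hXpos).mp h5
  have hLrt : L * rt ≤ Real.sqrt (8 * α / γ) * nrm (wstar - w 0)
      * Real.sqrt (L / (A (K - 1) + a 1)) := by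
    have h1 : L * rt ≤ Real.sqrt (8 * α / γ * nrm (wstar - w 0) ^ 2 * (L / (A (K - 1) + a 1))) := by
      rw [← Real.sqrt_sq (by positivity : (0:ℝ) ≤ L * rt)]
      exact Real.sqrt_le_sqrt hR2
    have e5 : Real.sqrt (8 * α / γ * nrm (wstar - w 0) ^ 2 * (L / (A (K - 1) + a 1)))
        = Real.sqrt (8 * α / γ) * nrm (wstar - w 0) * Real.sqrt (L / (A (K - 1) + a 1)) := by
      rw [Real.sqrt_mul (by positivity : (0:ℝ) ≤ 8 * α / γ * nrm (wstar - w 0) ^ 2),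
        Real.sqrt_mul (by positivity : (0:ℝ) ≤ 8 * α / γ), Real.sqrt_sq (hnn _)]
    rw [e5] at h1
    exact h1
  -- ## conclusion
  have hcnn : (0:ℝ) ≤ (1 + δ / (α * γ)) * D := by positivity
  have hfinal := mul_le_mul_of_nonneg_left hLrt hcnn
  rw [hny]
  calc (⟪F (w (j0 + 1)), w (j0 + 1) - v⟫ : ℝ)
      ≤ (1 + δ / (α * γ)) * D * (L * rt) := hmerit
    _ ≤ (1 + δ / (α * γ)) * D * (Real.sqrt (8 * α / γ) * nrm (wstar - w 0)
          * Real.sqrt (L / (A (K - 1) + a 1))) := hfinal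
    _ = (1 + δ / (α * γ)) * Real.sqrt (8 * α / γ) * D * nrm (wstar - w 0) *
          Real.sqrt (L / (A (K - 1) + a 1)) := by ring
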